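/- For a real number β and integers ρ_1 ≥ ρ_2 ≥ ⋯ ≥ ρ_{2l} ≥ 0, the Pfaffian of the 2l×2l antisymmetric matrix with (j,k) entry sgn(k-j) · β^{|ρ_j - ρ_k + k - j|} equals β^{l} · β^{Σ_{j=1}^{2l} (-1)^{j-1} ρ_j}; equivalently β^{-l} Pf[sgn(k-j) β^{|ρ_j-ρ_k+k-j|}] = β^{Σ_{j}(-1)^{j-1}ρ_j}. -/

import Mathlib

open Finset

/-- The first element of the `i`-th pair in `Fin (2*n)`. -/
def pairLo {n : ℕ} (i : Fin n) : Fin (2 * n) := ⟨2 * i.1, by have := i.isLt; omega⟩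

/-- The second element of the `i`-th pair in `Fin (2*n)`. -/
def pairHi {n : ℕ} (i : Fin n) : Fin (2 * n) := ⟨2 * i.1 + 1, by have := i.isLt; omega⟩

/-- The Pfaffian of a `2n × 2n` matrix, defined as the sum over perfect matchings
(encoded as permutations in canonical form) of the signed product of entries. -/
def pf {n : ℕ} {R : Type*} [CommRing R] (A : Matrix (Fin (2 * n)) (Fin (2 * n)) R) : R :=
  ∑ σ ∈ Finset.univ.filter
      (fun σ : Equiv.Perm (Fin (2 * n)) =>
        (∀ i : Fin n, σ (pairLo i) < σ (pairHi i)) ∧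
        ∀ i j : Fin n, i < j → σ (pairLo i) < σ (pairLo j)),
    (Equiv.Perm.sign σ : ℤ) • ∏ i : Fin n, A (σ (pairLo i)) (σ (pairHi i))

namespace PfAux

variable {n : ℕ}

lemma pairLo_ne_pairHi (i j : Fin n) : pairLo i ≠ pairHi j := by
  intro h; have := congrArg Fin.val h; simp only [pairLo, pairHi] at this; omega

lemma pairHi_injective : Function.Injective (pairHi (n := n)) := by
  intro i j h; have := congrArg Fin.val h; simp only [pairHi] at this
  exact Fin.ext (by omega)

lemma pair_cover (x : Fin (2 * n)) :
    x = pairLo ⟨x.1 / 2, by have h : x.1 < 2*n := x.isLt; omega⟩ ∨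
    x = pairHi ⟨x.1 / 2, by have h : x.1 < 2*n := x.isLt; omega⟩ := by
  rcases Nat.even_or_odd x.1 with ⟨k, hk⟩ | ⟨k, hk⟩
  · left; apply Fin.ext; simp only [pairLo]; omega
  · right; apply Fin.ext; simp only [pairHi]; omega

lemma sum_pairs {M : Type*} [AddCommMonoid M] (f : Fin (2 * n) → M) :
    ∑ x, f x = ∑ i : Fin n, (f (pairLo i) + f (pairHi i)) := by
  have e : ∀ p : Fin n × Fin 2, 2 * p.1.1 + p.2.1 < 2 * n := by
    rintro ⟨i, b⟩; have := i.isLt; have := b.isLt; omega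
  have hbij : Function.Bijective
      (fun p : Fin n × Fin 2 => (⟨2 * p.1.1 + p.2.1, e p⟩ : Fin (2 * n))) := by
    rw [Fintype.bijective_iff_injective_and_card]
    constructor
    · rintro ⟨i, b⟩ ⟨j, c⟩ h
      have h' := congrArg Fin.val h
      simp only at h'
      have hb := b.isLt; have hc := c.isLt
      have : i.1 = j.1 ∧ b.1 = c.1 := by omega
      exact Prod.ext (Fin.ext this.1) (Fin.ext this.2)
    · simp [mul_comm]
  rw [← Fintype.sum_bijective _ hbij _ f (fun _ => rfl)]
  rw [Fintype.sum_prod_type]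
  refine Finset.sum_congr rfl fun i _ => ?_
  rw [Fin.sum_univ_two]
  rfl

lemma swap_pairHi (a b i : Fin n) :
    Equiv.swap (pairHi a) (pairHi b) (pairHi i) = pairHi (Equiv.swap a b i) := by
  rcases eq_or_ne i a with rfl | ha
  · rw [Equiv.swap_apply_left, Equiv.swap_apply_left]
  rcases eq_or_ne i b with rfl | hb
  · rw [Equiv.swap_apply_right, Equiv.swap_apply_right]
  rw [Equiv.swap_apply_of_ne_of_ne (fun h => ha (pairHi_injective h))
      (fun h => hb (pairHi_injective h)),
    Equiv.swap_apply_of_ne_of_ne ha hb]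

lemma pairLo_injective : Function.Injective (pairLo (n := n)) := by
  intro i j h; have := congrArg Fin.val h; simp only [pairLo] at this
  exact Fin.ext (by omega)

variable {n : ℕ}
lemma eq_one_of_good (σ : Equiv.Perm (Fin (2 * n)))
    (h1 : ∀ i, σ (pairLo i) < σ (pairHi i))
    (h2 : ∀ i j : Fin n, i < j → σ (pairLo i) < σ (pairLo j))
    (hgood : ∀ i i' : Fin n,
      ¬(σ (pairLo i) < σ (pairLo i') ∧ σ (pairLo i') < σ (pairHi i))) :
    σ = 1 := by
  -- Step 1 : each high is low + 1
  have hstep1 : ∀ i : Fin n, (σ (pairHi i)).1 = (σ (pairLo i)).1 + 1 := by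
    intro i
    by_contra hne
    have hlt : (σ (pairLo i)).1 + 1 < (σ (pairHi i)).1 := by
      have := h1 i; rw [Fin.lt_def] at this; omega
    have hmlt : (σ (pairLo i)).1 + 1 < 2 * n := lt_trans hlt (σ (pairHi i)).isLt
    set m : Fin (2 * n) := ⟨(σ (pairLo i)).1 + 1, hmlt⟩ with hm
    have hcov : (∃ j : Fin n, σ (pairLo j) = m) ∨ (∃ j : Fin n, σ (pairHi j) = m) := by
      rcases pair_cover (σ.symm m) with hx | hx
      · exact Or.inl ⟨_, by rw [← hx]; simp⟩
      · exact Or.inr ⟨_, by rw [← hx]; simp⟩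
    rcases hcov with ⟨j, hj⟩ | ⟨j, hj⟩
    · exact hgood i j ⟨by rw [hj]; exact Fin.lt_def.2 (by simp [hm]),
        by rw [hj]; exact Fin.lt_def.2 hlt⟩
    · have hji : j ≠ i := by
        intro h; rw [h] at hj
        have := congrArg Fin.val hj
        simp only [hm] at this; omega
      have hLne : (σ (pairLo j)).1 ≠ (σ (pairLo i)).1 := by
        intro h
        exact hji (pairLo_injective (σ.injective (Fin.ext h)))
      have hLj : (σ (pairLo j)).1 < (σ (pairLo i)).1 := by
        have := Fin.lt_def.1 (h1 j)
        rw [hj] at this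
        simp only [hm] at this
        omega
      exact hgood j i ⟨Fin.lt_def.2 hLj, by
        rw [hj]; exact Fin.lt_def.2 (by simp [hm])⟩
  -- Step 2 : lower bound on lows
  have hmono : ∀ m : ℕ, ∀ hm : m < n, 2 * m ≤ (σ (pairLo ⟨m, hm⟩)).1 := by
    intro m
    induction m with
    | zero => intro hm; omega
    | succ k ih =>
      intro hm
      have hk : k < n := by omega
      have h1' := ih hk
      have hlt : σ (pairLo ⟨k, hk⟩) < σ (pairLo ⟨k+1, hm⟩) :=
        h2 _ _ (by simp [Fin.lt_def])
      have hHk := hstep1 ⟨k, hk⟩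
      have hne : (σ (pairHi ⟨k, hk⟩)).1 ≠ (σ (pairLo ⟨k+1, hm⟩)).1 := by
        intro h
        exact pairLo_ne_pairHi ⟨k+1, hm⟩ ⟨k, hk⟩ (σ.injective (Fin.ext h)).symm
      rw [Fin.lt_def] at hlt
      omega
  -- Step 3 : sums
  have hsumtot : ∑ i : Fin n, ((σ (pairLo i)).1 + (σ (pairHi i)).1)
      = ∑ i : Fin n, ((pairLo i).1 + (pairHi i).1) := by
    rw [← sum_pairs (fun x => (σ x).1), ← sum_pairs (fun x => x.1)]
    exact Equiv.sum_comp σ (fun x => x.1)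
  have hsumL : ∑ i : Fin n, (σ (pairLo i)).1 = ∑ i : Fin n, 2 * i.1 := by
    have e1 : ∑ i : Fin n, ((σ (pairLo i)).1 + (σ (pairHi i)).1)
        = ∑ i : Fin n, (2 * (σ (pairLo i)).1 + 1) :=
      Finset.sum_congr rfl fun i _ => by rw [hstep1 i]; ring
    have e2 : ∑ i : Fin n, ((pairLo i).1 + (pairHi i).1)
        = ∑ i : Fin n, (2 * (2 * i.1) + 1) :=
      Finset.sum_congr rfl fun i _ => by simp only [pairLo, pairHi]; ring
    rw [e1, e2] at hsumtot
    rw [Finset.sum_add_distrib, Finset.sum_add_distrib, ← Finset.mul_sum, ← Finset.mul_sum]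
      at hsumtot
    omega
  -- Step 4 : equality pointwise
  have hLeq : ∀ i : Fin n, (σ (pairLo i)).1 = 2 * i.1 := by
    by_contra hc
    push_neg at hc
    obtain ⟨i0, hi0⟩ := hc
    have hstrict : ∑ i : Fin n, 2 * i.1 < ∑ i : Fin n, (σ (pairLo i)).1 :=
      Finset.sum_lt_sum (fun i _ => hmono i.1 i.isLt)
        ⟨i0, Finset.mem_univ _, lt_of_le_of_ne (hmono i0.1 i0.isLt) (Ne.symm hi0)⟩
    omega
  -- conclude
  apply Equiv.ext
  intro x
  rcases pair_cover x with hx | hx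
  · rw [hx]
    apply Fin.ext
    simp only [Equiv.Perm.one_apply]
    rw [hLeq]
    rfl
  · rw [hx]
    apply Fin.ext
    simp only [Equiv.Perm.one_apply]
    rw [hstep1, hLeq]
    rfl

variable {n : ℕ}
open Classical in
/-- witnesses that pair `i'`'s low lies strictly inside pair `i`'s interval -/
noncomputable def witSet (σ : Equiv.Perm (Fin (2 * n))) (i : Fin n) : Finset (Fin n) :=
  Finset.univ.filter (fun i' => σ (pairLo i) < σ (pairLo i') ∧ σ (pairLo i') < σ (pairHi i))

open Classical in
noncomputable def badSet (σ : Equiv.Perm (Fin (2 * n))) : Finset (Fin n) :=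
  Finset.univ.filter (fun i => (witSet σ i).Nonempty)

lemma mem_witSet {σ : Equiv.Perm (Fin (2 * n))} {i i' : Fin n} :
    i' ∈ witSet σ i ↔ σ (pairLo i) < σ (pairLo i') ∧ σ (pairLo i') < σ (pairHi i) := by
  simp [witSet]

lemma mem_badSet {σ : Equiv.Perm (Fin (2 * n))} {i : Fin n} :
    i ∈ badSet σ ↔ (witSet σ i).Nonempty := by
  simp [badSet]

noncomputable def idx1 (σ : Equiv.Perm (Fin (2 * n))) (h : (badSet σ).Nonempty) : Fin n :=
  (badSet σ).min' h

noncomputable def idx2 (σ : Equiv.Perm (Fin (2 * n))) (h : (badSet σ).Nonempty) : Fin n :=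
  (witSet σ (idx1 σ h)).min' (mem_badSet.mp ((badSet σ).min'_mem h))

noncomputable def invol (σ : Equiv.Perm (Fin (2 * n))) (h : (badSet σ).Nonempty) :
    Equiv.Perm (Fin (2 * n)) :=
  σ * Equiv.swap (pairHi (idx1 σ h)) (pairHi (idx2 σ h))

section
variable {σ : Equiv.Perm (Fin (2 * n))} (h : (badSet σ).Nonempty)

lemma idx2_mem : idx2 σ h ∈ witSet σ (idx1 σ h) := Finset.min'_mem _ _

lemma idx2_spec1 : σ (pairLo (idx1 σ h)) < σ (pairLo (idx2 σ h)) :=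
  (mem_witSet.mp (idx2_mem h)).1

lemma idx2_spec2 : σ (pairLo (idx2 σ h)) < σ (pairHi (idx1 σ h)) :=
  (mem_witSet.mp (idx2_mem h)).2

lemma lt_of_lo_lt (h2 : ∀ i j : Fin n, i < j → σ (pairLo i) < σ (pairLo j))
    {i j : Fin n} (hij : σ (pairLo i) < σ (pairLo j)) : i < j := by
  rcases lt_trichotomy i j with hlt | rfl | hgt
  · exact hlt
  · exact absurd hij (lt_irrefl _)
  · exact absurd (h2 _ _ hgt) (asymm hij)

lemma idx1_lt_idx2 (h2 : ∀ i j : Fin n, i < j → σ (pairLo i) < σ (pairLo j)) :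
    idx1 σ h < idx2 σ h := lt_of_lo_lt h2 (idx2_spec1 h)

lemma invol_pairLo (i : Fin n) : invol σ h (pairLo i) = σ (pairLo i) := by
  simp only [invol, Equiv.Perm.mul_apply]
  rw [Equiv.swap_apply_of_ne_of_ne (pairLo_ne_pairHi _ _) (pairLo_ne_pairHi _ _)]

lemma invol_pairHi (i : Fin n) :
    invol σ h (pairHi i) = σ (pairHi (Equiv.swap (idx1 σ h) (idx2 σ h) i)) := by
  simp only [invol, Equiv.Perm.mul_apply]
  rw [swap_pairHi]

lemma invol_pairHi_idx1 : invol σ h (pairHi (idx1 σ h)) = σ (pairHi (idx2 σ h)) := by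
  rw [invol_pairHi, Equiv.swap_apply_left]

lemma invol_pairHi_idx2 : invol σ h (pairHi (idx2 σ h)) = σ (pairHi (idx1 σ h)) := by
  rw [invol_pairHi, Equiv.swap_apply_right]

lemma invol_pairHi_other {i : Fin n} (hi1 : i ≠ idx1 σ h) (hi2 : i ≠ idx2 σ h) :
    invol σ h (pairHi i) = σ (pairHi i) := by
  rw [invol_pairHi, Equiv.swap_apply_of_ne_of_ne hi1 hi2]

/-- the involution stays in the canonical set -/
lemma invol_cond1 (h1 : ∀ i : Fin n, σ (pairLo i) < σ (pairHi i)) : ∀ i : Fin n, invol σ h (pairLo i) < invol σ h (pairHi i) := by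
  intro i
  rw [invol_pairLo]
  rcases eq_or_ne i (idx1 σ h) with rfl | hi1
  · rw [invol_pairHi_idx1]
    exact lt_trans (idx2_spec1 h) (h1 _)
  rcases eq_or_ne i (idx2 σ h) with rfl | hi2
  · rw [invol_pairHi_idx2]
    exact idx2_spec2 h
  · rw [invol_pairHi_other h hi1 hi2]
    exact h1 i

lemma invol_cond2 (h2 : ∀ i j : Fin n, i < j → σ (pairLo i) < σ (pairLo j)) : ∀ i j : Fin n, i < j → invol σ h (pairLo i) < invol σ h (pairLo j) := by
  intro i j hij
  rw [invol_pairLo, invol_pairLo]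
  exact h2 i j hij

/-- `idx1` is not bad for indices before it -/
lemma not_mem_badSet_of_lt {i : Fin n} (hi : i < idx1 σ h) : i ∉ badSet σ := by
  intro hmem
  exact absurd (Finset.min'_le _ _ hmem) (not_le.mpr hi)

lemma idx1_mem_badSet_invol (h1 : ∀ i : Fin n, σ (pairLo i) < σ (pairHi i)) :
    idx1 σ h ∈ badSet (invol σ h) := by
  rw [mem_badSet]
  refine ⟨idx2 σ h, mem_witSet.mpr ⟨?_, ?_⟩⟩
  · rw [invol_pairLo, invol_pairLo]; exact idx2_spec1 h
  · rw [invol_pairLo, invol_pairHi_idx1]; exact h1 _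

lemma badSet_invol_nonempty (h1 : ∀ i : Fin n, σ (pairLo i) < σ (pairHi i)) : (badSet (invol σ h)).Nonempty := by
  refine ⟨idx1 σ h, ?_⟩
  rw [mem_badSet]
  refine ⟨idx2 σ h, mem_witSet.mpr ⟨?_, ?_⟩⟩
  · rw [invol_pairLo, invol_pairLo]; exact idx2_spec1 h
  · rw [invol_pairLo, invol_pairHi_idx1]; exact h1 _

lemma idx1_invol (h1 : ∀ i : Fin n, σ (pairLo i) < σ (pairHi i))
    (h2 : ∀ i j : Fin n, i < j → σ (pairLo i) < σ (pairLo j))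
    (h' : (badSet (invol σ h)).Nonempty) : idx1 (invol σ h) h' = idx1 σ h := by
  refine le_antisymm (Finset.min'_le _ _ (idx1_mem_badSet_invol h h1)) ?_
  by_contra hc
  push_neg at hc
  -- hc : idx1 (invol σ h) h' < idx1 σ h
  set j := idx1 (invol σ h) h' with hj
  have hjmem : j ∈ badSet (invol σ h) := Finset.min'_mem _ _
  rw [mem_badSet] at hjmem
  obtain ⟨j', hj'⟩ := hjmem
  rw [mem_witSet] at hj'
  have hj1 : j ≠ idx1 σ h := ne_of_lt hc
  have hj2 : j ≠ idx2 σ h := ne_of_lt (lt_trans hc (idx1_lt_idx2 h h2))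
  rw [invol_pairLo, invol_pairLo, invol_pairHi_other h hj1 hj2] at hj'
  exact not_mem_badSet_of_lt h hc (mem_badSet.mpr ⟨j', mem_witSet.mpr hj'⟩)

lemma idx2_invol (h1 : ∀ i : Fin n, σ (pairLo i) < σ (pairHi i))
    (h2 : ∀ i j : Fin n, i < j → σ (pairLo i) < σ (pairLo j))
    (h' : (badSet (invol σ h)).Nonempty) : idx2 (invol σ h) h' = idx2 σ h := by
  have hkey := idx1_invol h h1 h2 h'
  refine le_antisymm ?_ ?_
  · apply Finset.min'_le
    rw [mem_witSet, hkey, invol_pairLo, invol_pairLo, invol_pairHi_idx1]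
    exact ⟨idx2_spec1 h, h1 _⟩
  · by_contra hc
    push_neg at hc
    set j := idx2 (invol σ h) h' with hj
    have hjmem : j ∈ witSet (invol σ h) (idx1 (invol σ h) h') := Finset.min'_mem _ _
    rw [mem_witSet, hkey, invol_pairLo, invol_pairLo, invol_pairHi_idx1] at hjmem
    -- hjmem : σ lo i1 < σ lo j ∧ σ lo j < σ hi i2 ; hc : j < idx2 σ h
    have hjw : j ∈ witSet σ (idx1 σ h) := by
      rw [mem_witSet]
      refine ⟨hjmem.1, lt_trans (h2 _ _ hc) (idx2_spec2 h)⟩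
    exact absurd (Finset.min'_le _ _ hjw) (not_le.mpr hc)

lemma invol_invol (h1 : ∀ i : Fin n, σ (pairLo i) < σ (pairHi i))
    (h2 : ∀ i j : Fin n, i < j → σ (pairLo i) < σ (pairLo j))
    (h' : (badSet (invol σ h)).Nonempty) : invol (invol σ h) h' = σ := by
  rw [invol, idx1_invol h h1 h2 h', idx2_invol h h1 h2 h']
  rw [invol, mul_assoc, Equiv.swap_mul_self, mul_one]

lemma invol_ne_one (h1 : ∀ i : Fin n, σ (pairLo i) < σ (pairHi i)) : invol σ h ≠ 1 := by
  intro hone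
  have := badSet_invol_nonempty h h1
  rw [hone] at this
  obtain ⟨i, hi⟩ := this
  rw [mem_badSet] at hi
  obtain ⟨i', hi'⟩ := hi
  rw [mem_witSet] at hi'
  have a1 := Fin.lt_def.1 hi'.1
  have a2 := Fin.lt_def.1 hi'.2
  simp only [Equiv.Perm.one_apply, pairLo, pairHi] at a1 a2
  omega

lemma invol_ne_self (h2 : ∀ i j : Fin n, i < j → σ (pairLo i) < σ (pairLo j)) :
    invol σ h ≠ σ := by
  intro hself
  have hh := congrArg (fun τ : Equiv.Perm (Fin (2*n)) => τ (pairHi (idx1 σ h))) hself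
  rw [invol_pairHi_idx1] at hh
  have heq := pairHi_injective (σ.injective hh)
  have hlt := idx1_lt_idx2 h h2
  rw [heq] at hlt
  exact lt_irrefl _ hlt

lemma sign_invol (h2 : ∀ i j : Fin n, i < j → σ (pairLo i) < σ (pairLo j)) :
    Equiv.Perm.sign (invol σ h) = - Equiv.Perm.sign σ := by
  rw [invol, Equiv.Perm.sign_mul, Equiv.Perm.sign_swap, mul_neg, mul_one]
  intro heq
  have heq2 := pairHi_injective heq
  have hlt := idx1_lt_idx2 h h2
  rw [heq2] at hlt
  exact lt_irrefl _ hlt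

end

end PfAux

open Equiv PfAux

/-- for weakly decreasing nonnegative integers `ρ_1 ≥ ⋯ ≥ ρ_{2l} ≥ 0` and `β ≠ 0`,
`Pf[sgn(k-j) β^{|ρ_j - ρ_k + k - j|}] = β^l · β^{Σ_{j=1}^{2l} (-1)^{j-1} ρ_j}`. -/
theorem pf_sgn_beta_matrix (l : ℕ) (β : ℝ) (hβ : β ≠ 0)
    (ρ : Fin (2 * l) → ℕ) (hρ : Antitone ρ) :
    pf (Matrix.of fun j k : Fin (2 * l) =>
      (if j < k then (1 : ℝ) else if k < j then -1 else 0) *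
        β ^ ((ρ j : ℤ) - (ρ k : ℤ) + ((k : ℕ) : ℤ) - ((j : ℕ) : ℤ)).natAbs) =
    β ^ ((l : ℤ) + ∑ j : Fin (2 * l), (-1 : ℤ) ^ (j : ℕ) * (ρ j : ℤ)) := by
  classical
  set e : Fin (2 * l) → ℤ := fun j => (ρ j : ℤ) - (j.1 : ℤ) with he
  -- the matrix entries for ordered pairs
  have entry_eq : ∀ {j k : Fin (2 * l)}, j < k →
      (if j < k then (1 : ℝ) else if k < j then -1 else 0) *
        β ^ ((ρ j : ℤ) - (ρ k : ℤ) + ((k : ℕ) : ℤ) - ((j : ℕ) : ℤ)).natAbs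
      = β ^ (e j - e k) := by
    intro j k hjk
    rw [if_pos hjk, one_mul]
    have hk := hρ (le_of_lt hjk)
    have hjk' := Fin.lt_def.1 hjk
    have hnn : (0:ℤ) ≤ (ρ j : ℤ) - (ρ k : ℤ) + ((k : ℕ) : ℤ) - ((j : ℕ) : ℤ) := by
      omega
    calc β ^ ((ρ j : ℤ) - (ρ k : ℤ) + ((k : ℕ) : ℤ) - ((j : ℕ) : ℤ)).natAbs
        = β ^ ((((ρ j : ℤ) - (ρ k : ℤ) + ((k : ℕ) : ℤ) - ((j : ℕ) : ℤ)).natAbs : ℤ)) :=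
          (zpow_natCast β _).symm
      _ = β ^ (e j - e k) := by
          congr 1
          rw [Int.natAbs_of_nonneg hnn]
          simp only [he]
          ring
  -- products of zpow
  have prod_zpow : ∀ (c : Fin l → ℤ), ∏ i : Fin l, β ^ (c i) = β ^ (∑ i : Fin l, c i) := by
    intro c
    induction (Finset.univ : Finset (Fin l)) using Finset.cons_induction with
    | empty => simp
    | cons a s ha ih => rw [Finset.prod_cons, Finset.sum_cons, zpow_add₀ hβ, ih]
  set S : Finset (Equiv.Perm (Fin (2 * l))) := Finset.univ.filter
      (fun σ : Equiv.Perm (Fin (2 * l)) =>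
        (∀ i : Fin l, σ (pairLo i) < σ (pairHi i)) ∧
        ∀ i j : Fin l, i < j → σ (pairLo i) < σ (pairLo j)) with hS
  set A : Equiv.Perm (Fin (2 * l)) → ℤ := fun σ => ∑ i : Fin l, e (σ (pairLo i)) with hA
  set B : Equiv.Perm (Fin (2 * l)) → ℤ := fun σ => ∑ i : Fin l, e (σ (pairHi i)) with hB
  set F : Equiv.Perm (Fin (2 * l)) → ℝ := fun σ =>
    ((Equiv.Perm.sign σ : ℤ) : ℝ) * β ^ (A σ - B σ) with hF
  have hpf : pf (Matrix.of fun j k : Fin (2 * l) =>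
      (if j < k then (1 : ℝ) else if k < j then -1 else 0) *
        β ^ ((ρ j : ℤ) - (ρ k : ℤ) + ((k : ℕ) : ℤ) - ((j : ℕ) : ℤ)).natAbs)
      = ∑ σ ∈ S, F σ := by
    rw [pf]
    apply Finset.sum_congr
    · rfl
    intro σ hσ
    rw [Finset.mem_filter] at hσ
    obtain ⟨-, hc1, hc2⟩ := hσ
    rw [zsmul_eq_mul, hF]
    congr 1
    have hsplit : A σ - B σ = ∑ i : Fin l, (e (σ (pairLo i)) - e (σ (pairHi i))) := by
      rw [hA, hB]
      exact (Finset.sum_sub_distrib (f := fun i : Fin l => e (σ (pairLo i)))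
        (g := fun i : Fin l => e (σ (pairHi i)))).symm
    rw [hsplit, ← prod_zpow]
    exact Finset.prod_congr rfl fun i _ => entry_eq (hc1 i)
  rw [hpf]
  have h1mem : (1 : Equiv.Perm (Fin (2 * l))) ∈ S := by
    rw [hS, Finset.mem_filter]
    refine ⟨Finset.mem_univ _, fun i => ?_, fun i j hij => ?_⟩
    · simp only [Equiv.Perm.one_apply, Fin.lt_def, pairLo, pairHi]
      omega
    · simp only [Equiv.Perm.one_apply, Fin.lt_def, pairLo, pairHi]
      have := Fin.lt_def.1 hij
      omega
  rw [← Finset.add_sum_erase S F h1mem]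
  -- badSet nonemptiness for non-identity canonical perms
  have hne : ∀ σ ∈ S.erase 1, (badSet σ).Nonempty := by
    intro σ hσ
    rw [Finset.mem_erase, hS, Finset.mem_filter] at hσ
    obtain ⟨hσ1, -, hc1, hc2⟩ := hσ
    by_contra hemp
    rw [Finset.not_nonempty_iff_eq_empty] at hemp
    refine hσ1 (eq_one_of_good σ hc1 hc2 fun i i' hii' => ?_)
    have : i ∈ badSet σ := mem_badSet.mpr ⟨i', mem_witSet.mpr hii'⟩
    rw [hemp] at this
    exact absurd this (Finset.notMem_empty _)
  have hmemS : ∀ σ (hσ : σ ∈ S.erase 1), invol σ (hne σ hσ) ∈ S.erase 1 := by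
    intro σ hσ
    have hσ' := hσ
    rw [Finset.mem_erase, hS, Finset.mem_filter] at hσ'
    obtain ⟨hσ1, -, hc1, hc2⟩ := hσ'
    rw [Finset.mem_erase, hS, Finset.mem_filter]
    exact ⟨invol_ne_one _ hc1, Finset.mem_univ _, invol_cond1 _ hc1, invol_cond2 _ hc2⟩
  have hzero : ∑ σ ∈ S.erase 1, F σ = 0 := by
    refine Finset.sum_involution (fun σ hσ => invol σ (hne σ hσ)) ?_ ?_ hmemS ?_
    · -- F σ + F (invol σ _) = 0
      intro σ hσ
      have hσ' := hσ
      rw [Finset.mem_erase, hS, Finset.mem_filter] at hσ'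
      obtain ⟨hσ1, -, hc1, hc2⟩ := hσ'
      have hsign : ((Equiv.Perm.sign (invol σ (hne σ hσ)) : ℤ) : ℝ)
          = -((Equiv.Perm.sign σ : ℤ) : ℝ) := by
        rw [sign_invol _ hc2]
        push_cast
        ring
      have hAeq : A (invol σ (hne σ hσ)) = A σ := by
        rw [hA]
        exact Finset.sum_congr rfl fun i _ => by rw [invol_pairLo]
      have hBeq : B (invol σ (hne σ hσ)) = B σ := by
        rw [hB]
        simp only
        rw [Finset.sum_congr rfl fun i (_ : i ∈ Finset.univ) => by
          rw [invol_pairHi (h := hne σ hσ) i]]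
        exact Equiv.sum_comp (Equiv.swap (idx1 σ (hne σ hσ)) (idx2 σ (hne σ hσ)))
          (fun i => e (σ (pairHi i)))
      rw [hF]
      simp only
      rw [hAeq, hBeq, hsign]
      ring
    · intro σ hσ _
      have hσ' := hσ
      rw [Finset.mem_erase, hS, Finset.mem_filter] at hσ'
      obtain ⟨hσ1, -, hc1, hc2⟩ := hσ'
      exact invol_ne_self _ hc2
    · intro σ hσ
      have hσ' := hσ
      rw [Finset.mem_erase, hS, Finset.mem_filter] at hσ'
      obtain ⟨hσ1, -, hc1, hc2⟩ := hσ'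
      exact invol_invol _ hc1 hc2 _
  rw [hzero, add_zero, hF]
  simp only [Equiv.Perm.sign_one, Units.val_one, Int.cast_one, one_mul]
  congr 1
  -- exponent identity
  have hA1 : A 1 = ∑ i : Fin l, e (pairLo i) := by
    rw [hA]; exact Finset.sum_congr rfl fun i _ => by rw [Equiv.Perm.one_apply]
  have hB1 : B 1 = ∑ i : Fin l, e (pairHi i) := by
    rw [hB]; exact Finset.sum_congr rfl fun i _ => by rw [Equiv.Perm.one_apply]
  have hmerge : A 1 - B 1 = ∑ i : Fin l, (e (pairLo i) - e (pairHi i)) := by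
    rw [hA1, hB1]
    exact (Finset.sum_sub_distrib (f := fun i : Fin l => e (pairLo i))
      (g := fun i : Fin l => e (pairHi i))).symm
  rw [hmerge]
  have hrhs : ∑ j : Fin (2 * l), (-1 : ℤ) ^ (j.1 : ℕ) * (ρ j : ℤ)
      = ∑ i : Fin l, ((ρ (pairLo i) : ℤ) - (ρ (pairHi i) : ℤ)) := by
    rw [sum_pairs (fun j => (-1 : ℤ) ^ (j.1 : ℕ) * (ρ j : ℤ))]
    apply Finset.sum_congr rfl
    intro i _
    have hlo : (pairLo i).1 = 2 * i.1 := rfl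
    have hhi : (pairHi i).1 = 2 * i.1 + 1 := rfl
    rw [hlo, hhi, pow_succ, pow_mul]
    have h2 : ((-1:ℤ)^2) = 1 := by norm_num
    rw [h2, one_pow]
    ring
  have hlhs : ∑ i : Fin l, (e (pairLo i) - e (pairHi i))
      = ∑ i : Fin l, (((ρ (pairLo i) : ℤ) - (ρ (pairHi i) : ℤ)) + 1) := by
    apply Finset.sum_congr rfl
    intro i _
    have hlo : ((pairLo i).1 : ℤ) = 2 * (i.1 : ℤ) := by
      simp only [pairLo]; push_cast; ring
    have hhi : ((pairHi i).1 : ℤ) = 2 * (i.1 : ℤ) + 1 := by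
      simp only [pairHi]; push_cast; ring
    simp only [he, hlo, hhi]
    ring
  rw [hrhs, hlhs, Finset.sum_add_distrib]
  simp [add_comm]
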